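/- Let k ≥ 1 odd, n > 2k, μ > 0, q = (n+2)k/(n-2k). Then v(r) = [ (binom(n,k)·((n-2k)/k · μ)^k)^{1/(k+1)} / (1 + μ r²) ]^{(n-2k)/(2k)} satisfies c_{n,k} r^{1-n}(r^{n-k}(v')^k)' + v^q = 0 for all r > 0. -/

import Mathlib

noncomputable def cmmProfile (n k : ℕ) (μ : ℝ) : ℝ → ℝ :=
  fun r => (((n.choose k : ℝ) * ((((n : ℝ) - 2 * k) / k) * μ) ^ k) ^ ((1 : ℝ) / (k + 1)) /
      (1 + μ * r ^ 2)) ^ (((n : ℝ) - 2 * k) / (2 * k))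

/-- For `k` odd, `n > 2k`, `μ > 0` and `q = (n+2)k/(n-2k)`, the profile `v = cmmProfile`
satisfies `c_{n,k} r^{1-n}(r^{n-k}(v')^k)' + v^q = 0` for all `r > 0`. -/
theorem stmt17 (n k : ℕ) (μ q c : ℝ) (hk : 1 ≤ k) (hkodd : Odd k) (hnk : 2 * k < n)
    (hμ : 0 < μ) (hq : q = ((n : ℝ) + 2) * k / ((n : ℝ) - 2 * k))
    (hc : c = (1 / n) * (n.choose k)) :
    ∀ r > (0 : ℝ),
      c * r ^ ((1 : ℝ) - n) *
          deriv (fun ρ => ρ ^ ((n : ℝ) - k) * (deriv (cmmProfile n k μ) ρ) ^ k) r +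
        (cmmProfile n k μ r) ^ q = 0 := by
  intro r hr
  have hk0 : (0:ℝ) < (k:ℝ) := by exact_mod_cast Nat.pos_of_ne_zero (by omega)
  have hnkR : (0:ℝ) < (n:ℝ) - 2*(k:ℝ) := by
    have : ((2*k:ℕ):ℝ) < (n:ℕ) := by exact_mod_cast hnk
    push_cast at this; linarith
  have hn0 : (0:ℝ) < (n:ℝ) := by linarith
  set θ : ℝ := ((n:ℝ) - 2*(k:ℝ))/(2*(k:ℝ)) with hθ
  have hθpos : 0 < θ := by positivity
  set C : ℝ := (n.choose k : ℝ) with hCdef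
  have hC : 0 < C := by
    have h : 0 < n.choose k := Nat.choose_pos (by omega)
    rw [hCdef]; exact_mod_cast h
  set B : ℝ := (((n:ℝ) - 2*(k:ℝ))/(k:ℝ)) * μ with hBdef
  have hBpos : 0 < B := by positivity
  set A : ℝ := (C * B^k) ^ ((1:ℝ)/((k:ℝ)+1)) with hAdef
  have hApos : 0 < A := by positivity
  have hP : ∀ ρ:ℝ, 0 < 1 + μ*ρ^2 := fun ρ => by positivity
  -- rewrite the profile
  have hv : cmmProfile n k μ = fun ρ => A^θ * (1+μ*ρ^2)^(-θ) := by
    funext ρ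
    rw [cmmProfile]
    rw [Real.div_rpow hApos.le (hP ρ).le, Real.rpow_neg (hP ρ).le, div_eq_mul_inv]
  -- exponent arithmetic facts
  have eθ : θ * (k:ℝ) = ((n:ℝ)-2*(k:ℝ))/2 := by rw [hθ]; field_simp
  have eθ2 : (-θ-1) * (k:ℝ) = -((n:ℝ)/2) := by rw [hθ]; field_simp; ring
  have eq1 : θ * q = ((n:ℝ)+2)/2 := by rw [hθ, hq]; field_simp
  have eq2 : (-θ) * q = -((n:ℝ)/2)-1 := by rw [neg_mul, eq1]; ring
  have hB2 : 2*μ*θ = B := by rw [hθ, hBdef]; field_simp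
  have hAk : A^((k:ℝ)+1) = C * B^k := by
    rw [hAdef, ← Real.rpow_mul (by positivity : (0:ℝ) ≤ C*B^k),
      one_div_mul_cancel (by positivity : ((k:ℝ)+1) ≠ 0), Real.rpow_one]
  have hcn : c * (n:ℝ) = C := by rw [hc]; field_simp
  clear_value θ C B A
  -- derivative of the profile everywhere
  have hw : ∀ ρ : ℝ, HasDerivAt (cmmProfile n k μ)
      (A^θ * (-θ * (1+μ*ρ^2)^(-θ-1) * (2*μ*ρ))) ρ := by
    intro ρ
    rw [hv]
    have h1 : HasDerivAt (fun x:ℝ => 1 + μ*x^2) (2*μ*ρ) ρ := by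
      have := ((hasDerivAt_pow 2 ρ).const_mul μ).const_add 1
      exact this.congr_deriv (by push_cast; ring)
    have h2 := h1.rpow_const (p := -θ) (Or.inl (hP ρ).ne')
    have h3 := h2.const_mul (A^θ)
    exact h3.congr_deriv (by ring)
  have hderiv : deriv (cmmProfile n k μ)
      = fun ρ => A^θ * (-θ * (1+μ*ρ^2)^(-θ-1) * (2*μ*ρ)) := funext fun ρ => (hw ρ).deriv
  -- the inner function equals K * g on positive reals
  have hEq : ∀ ρ : ℝ, 0 < ρ → ρ^((n:ℝ)-(k:ℝ)) * (deriv (cmmProfile n k μ) ρ)^k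
      = -(B^k * A^(((n:ℝ)-2*(k:ℝ))/2)) * (ρ^((n:ℝ)) * (1+μ*ρ^2)^(-((n:ℝ)/2))) := by
    intro ρ hρ
    rw [hderiv]
    have hPρ := hP ρ
    have e0 : (fun x => A^θ * (-θ * (1+μ*x^2)^(-θ-1) * (2*μ*x))) ρ
        = (-1) * (A^θ * ((1+μ*ρ^2)^(-θ-1)) * (2*μ*θ) * ρ) := by ring
    rw [e0, mul_pow, hkodd.neg_one_pow, mul_pow, mul_pow, mul_pow, hB2]
    rw [← Real.rpow_natCast (A^θ) k, ← Real.rpow_mul hApos.le]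
    rw [← Real.rpow_natCast ((1+μ*ρ^2)^(-θ-1)) k, ← Real.rpow_mul hPρ.le]
    rw [← Real.rpow_natCast ρ k]
    rw [eθ, eθ2]
    have er : ρ^((n:ℝ)-(k:ℝ)) * ρ^((k:ℝ)) = ρ^((n:ℝ)) := by
      rw [← Real.rpow_add hρ]; norm_num
    rw [← er]; ring
  -- derivative of g at r
  have hg' : HasDerivAt (fun ρ:ℝ => ρ^((n:ℝ)) * (1+μ*ρ^2)^(-((n:ℝ)/2)))
      ((n:ℝ) * r^((n:ℝ)-1) * (1+μ*r^2)^(-((n:ℝ)/2)-1)) r := by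
    have h1 : HasDerivAt (fun x:ℝ => 1 + μ*x^2) (2*μ*r) r := by
      have := ((hasDerivAt_pow 2 r).const_mul μ).const_add 1
      exact this.congr_deriv (by push_cast; ring)
    have h2 := h1.rpow_const (p := -((n:ℝ)/2)) (Or.inl (hP r).ne')
    have h3 := Real.hasDerivAt_rpow_const (x := r) (p := (n:ℝ)) (Or.inl hr.ne')
    have h4 := h3.mul h2
    refine h4.congr_deriv ?_
    have hPr := hP r
    have e1 : (1+μ*r^2)^(-((n:ℝ)/2)) = (1+μ*r^2)^(-((n:ℝ)/2)-1) * (1+μ*r^2) := by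
      rw [← Real.rpow_add_one hPr.ne']; norm_num
    have e2 : r^((n:ℝ)) = r^((n:ℝ)-1) * r := by
      rw [← Real.rpow_add_one hr.ne']; norm_num
    rw [e1, e2]; ring
  -- the derivative of the inner function at r
  have hinner : deriv (fun ρ => ρ ^ ((n : ℝ) - (k:ℝ)) * (deriv (cmmProfile n k μ) ρ) ^ k) r
      = -(B^k * A^(((n:ℝ)-2*(k:ℝ))/2)) * ((n:ℝ) * r^((n:ℝ)-1) * (1+μ*r^2)^(-((n:ℝ)/2)-1)) := by
    have hev : (fun ρ => ρ ^ ((n : ℝ) - (k:ℝ)) * (deriv (cmmProfile n k μ) ρ) ^ k)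
        =ᶠ[nhds r] fun ρ => -(B^k * A^(((n:ℝ)-2*(k:ℝ))/2)) * (ρ^((n:ℝ)) * (1+μ*ρ^2)^(-((n:ℝ)/2))) := by
      filter_upwards [eventually_gt_nhds hr] with ρ hρ using hEq ρ hρ
    rw [Filter.EventuallyEq.deriv_eq hev]
    exact (hg'.const_mul (-(B^k * A^(((n:ℝ)-2*(k:ℝ))/2)))).deriv
  rw [hinner, hv]
  -- final algebra
  have hPr := hP r
  have hvq : (A^θ * (1+μ*r^2)^(-θ))^q
      = (A^(((n:ℝ)-2*(k:ℝ))/2) * (C * B^k)) * (1+μ*r^2)^(-((n:ℝ)/2)-1) := by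
    rw [Real.mul_rpow (by positivity) (by positivity),
        ← Real.rpow_mul hApos.le, ← Real.rpow_mul hPr.le, eq1, eq2]
    congr 1
    rw [← hAk, ← Real.rpow_add hApos]
    congr 1; ring
  rw [hvq]
  have err : r^((1:ℝ)-(n:ℝ)) * r^((n:ℝ)-1) = 1 := by
    rw [← Real.rpow_add hr]; norm_num
  have expand : c * r ^ ((1:ℝ) - (n:ℝ)) *
      (-(B^k * A^(((n:ℝ)-2*(k:ℝ))/2)) * ((n:ℝ) * r^((n:ℝ)-1) * (1+μ*r^2)^(-((n:ℝ)/2)-1)))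
      + (A^(((n:ℝ)-2*(k:ℝ))/2) * (C * B^k)) * (1+μ*r^2)^(-((n:ℝ)/2)-1)
      = (C * B^k * A^(((n:ℝ)-2*(k:ℝ))/2) * (1+μ*r^2)^(-((n:ℝ)/2)-1))
        * (1 - r^((1:ℝ)-(n:ℝ)) * r^((n:ℝ)-1)) := by
    rw [← hcn]; ring
  rw [expand, err]
  ring
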